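/- Unbiasedness of the difference-in-means estimator for the AEED in a completely randomized experiment: let 0 < n < N, let Ω be the set of assignment vectors z : Fin N → {0,1} with exactly n ones, let p be the uniform distribution on Ω, and let the exposure mapping be individualistic, g_i(z) = z_i. Then the difference-in-means estimator T(z) = (1/n) ∑_{i : z_i = 1} y_i(z) − (1/(N−n)) ∑_{i : z_i = 0} y_i(z) satisfies E[T] = τ(1, 0) = ȳ(1) − ȳ(0). -/

import Mathlib

open Finset

/-- Expectation with respect to a pmf `p` on a finite sample space. -/
noncomputable def expec {Ω : Type*} [Fintype Ω] (p : Ω → ℝ) (X : Ω → ℝ) : ℝ :=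
  ∑ ω, p ω * X ω

/-- Variance with respect to a pmf `p` on a finite sample space. -/
noncomputable def vari {Ω : Type*} [Fintype Ω] (p : Ω → ℝ) (X : Ω → ℝ) : ℝ :=
  expec p (fun ω => (X ω - expec p X) ^ 2)

/-- Exposure probability `π_i(d)`. -/
noncomputable def piP {Ω E : Type*} [Fintype Ω] [DecidableEq E] {N : ℕ}
    (p : Ω → ℝ) (g : Fin N → Ω → E) (d : E) (i : Fin N) : ℝ :=
  ∑ ω ∈ Finset.univ.filter (fun ω => g i ω = d), p ω

/-- Joint exposure probability `π_ij(d)`. -/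
noncomputable def piP2 {Ω E : Type*} [Fintype Ω] [DecidableEq E] {N : ℕ}
    (p : Ω → ℝ) (g : Fin N → Ω → E) (d : E) (i j : Fin N) : ℝ :=
  ∑ ω ∈ Finset.univ.filter (fun ω => g i ω = d ∧ g j ω = d), p ω

/-- Expected potential outcome (EPO) `ȳ_i(d)`. -/
noncomputable def epo {Ω E : Type*} [Fintype Ω] [DecidableEq E] {N : ℕ}
    (p : Ω → ℝ) (y : Fin N → Ω → ℝ) (g : Fin N → Ω → E) (d : E) (i : Fin N) : ℝ :=
  (∑ ω ∈ Finset.univ.filter (fun ω => g i ω = d), y i ω * p ω) / piP p g d i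

/-- Average expected potential outcome (AEPO) `ȳ(d)`. -/
noncomputable def aepo {Ω E : Type*} [Fintype Ω] [DecidableEq E] {N : ℕ}
    (p : Ω → ℝ) (y : Fin N → Ω → ℝ) (g : Fin N → Ω → E) (d : E) : ℝ :=
  (1 / (N : ℝ)) * ∑ i, epo p y g d i

/-- Horvitz–Thompson estimator `ŷ(d)` as a random variable on `Ω`. -/
noncomputable def ht {Ω E : Type*} [Fintype Ω] [DecidableEq E] {N : ℕ}
    (p : Ω → ℝ) (y : Fin N → Ω → ℝ) (g : Fin N → Ω → E) (d : E) (ω : Ω) : ℝ :=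
  (1 / (N : ℝ)) * ∑ i, y i ω * (if g i ω = d then (1 : ℝ) else 0) / piP p g d i

/-- No Unmodeled Revealable Variation Assumption (NURVA). -/
def NURVA {Ω E : Type*} {N : ℕ}
    (p : Ω → ℝ) (y : Fin N → Ω → ℝ) (g : Fin N → Ω → E) : Prop :=
  ∀ ω ω', 0 < p ω → 0 < p ω' → ∀ i : Fin N, g i ω = g i ω' → y i ω = y i ω'

/-- Sample space of a completely randomized experiment: assignment vectors
`z : Fin N → Bool` with exactly `n` treated units. -/
abbrev CRAssignments (N n : ℕ) : Type :=
  {z : Fin N → Bool // (Finset.univ.filter fun i => z i = true).card = n}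

/-- Uniform distribution over the complete randomization assignments. -/
noncomputable def crUniform (N n : ℕ) : CRAssignments N n → ℝ :=
  fun _ => (Fintype.card (CRAssignments N n) : ℝ)⁻¹

/-- Individualistic exposure mapping `g_i(z) = z_i` for the completely randomized
experiment, with exposures in `Bool` (`true` = treated, `false` = control). -/
def crExposure (N n : ℕ) : Fin N → CRAssignments N n → Bool :=
  fun i z => z.1 i

private lemma card_filter_comp_perm {N : ℕ} (z : Fin N → Bool) (σ : Equiv.Perm (Fin N)) :
    (univ.filter fun k => z (σ k) = true).card = (univ.filter fun k => z k = true).card := by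
  rw [← Finset.card_map σ.toEmbedding]
  congr 1
  ext m
  simp only [Finset.mem_map, Finset.mem_filter, Finset.mem_univ, true_and,
    Equiv.coe_toEmbedding]
  constructor
  · rintro ⟨k, hk, rfl⟩; exact hk
  · intro hm; exact ⟨σ.symm m, by simpa using hm, by simp⟩

private def crSwap {N n : ℕ} (i j : Fin N) (z : CRAssignments N n) : CRAssignments N n :=
  ⟨fun k => z.1 (Equiv.swap i j k), (card_filter_comp_perm z.1 _).trans z.2⟩

private lemma crSwap_crSwap {N n : ℕ} (i j : Fin N) (z : CRAssignments N n) :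
    crSwap i j (crSwap i j z) = z := by
  apply Subtype.ext; funext k
  show z.1 (Equiv.swap i j (Equiv.swap i j k)) = z.1 k
  rw [Equiv.swap_apply_self]

private lemma card_true_symm {N n : ℕ} (i j : Fin N) :
    (univ.filter fun z : CRAssignments N n => z.1 i = true).card
      = (univ.filter fun z : CRAssignments N n => z.1 j = true).card := by
  classical
  refine Finset.card_nbij' (crSwap i j) (crSwap i j) ?_ ?_ ?_ ?_
  · intro z hz
    simp only [mem_coe, mem_filter, mem_univ, true_and] at hz ⊢
    show z.1 (Equiv.swap i j j) = true
    rwa [Equiv.swap_apply_right]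
  · intro z hz
    simp only [mem_coe, mem_filter, mem_univ, true_and] at hz ⊢
    show z.1 (Equiv.swap i j i) = true
    rwa [Equiv.swap_apply_left]
  · intro z _; exact crSwap_crSwap i j z
  · intro z _; exact crSwap_crSwap i j z

private lemma N_mul_card_true {N n : ℕ} (i : Fin N) :
    N * (univ.filter fun z : CRAssignments N n => z.1 i = true).card
      = n * Fintype.card (CRAssignments N n) := by
  classical
  have h1 : ∑ j : Fin N, (univ.filter fun z : CRAssignments N n => z.1 j = true).card
      = N * (univ.filter fun z : CRAssignments N n => z.1 i = true).card := by
    rw [Finset.sum_congr rfl (fun j _ => card_true_symm j i)]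
    simp [mul_comm]
  rw [← h1]
  have h2 : ∀ j : Fin N, (univ.filter fun z : CRAssignments N n => z.1 j = true).card
      = ∑ z : CRAssignments N n, if z.1 j = true then 1 else 0 := by
    intro j; rw [Finset.card_filter]
  simp_rw [h2]
  rw [Finset.sum_comm]
  have h3 : ∀ z : CRAssignments N n, (∑ j : Fin N, if z.1 j = true then 1 else 0) = n := by
    intro z; rw [← Finset.card_filter]; exact z.2
  simp_rw [h3]
  simp [mul_comm]

private lemma CR_nonempty {N n : ℕ} (h : n < N) : Nonempty (CRAssignments N n) := by
  refine ⟨⟨fun i => decide (i.val < n), ?_⟩⟩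
  have : (univ.filter fun i : Fin N => (decide (i.val < n)) = true) = Finset.Iio ⟨n, h⟩ := by
    ext k; simp [Fin.lt_def]
  rw [this, Fin.card_Iio]
/-- In a completely randomized experiment with `0 < n < N` treated units
(uniform distribution on assignment vectors with exactly `n` ones, individualistic
exposure mapping), the difference-in-means estimator
`T(z) = (1/n) ∑_{i : z_i = 1} y_i(z) − (1/(N−n)) ∑_{i : z_i = 0} y_i(z)`
is unbiased for the AEED: `E[T] = τ(1,0) = ȳ(1) − ȳ(0)`. -/
private lemma sum_swap_bool {N n : ℕ} (y : Fin N → CRAssignments N n → ℝ) (c : ℝ) (d : Bool) :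
    ∑ z : CRAssignments N n, c * ∑ i ∈ univ.filter (fun i : Fin N => z.1 i = d), y i z
      = ∑ i : Fin N, c * ∑ z ∈ univ.filter (fun z : CRAssignments N n => z.1 i = d), y i z := by
  simp_rw [Finset.sum_filter, Finset.mul_sum]
  exact Finset.sum_comm

theorem diff_in_means_unbiased_for_aeed {N n : ℕ} (hn : 0 < n) (hnN : n < N)
    (y : Fin N → CRAssignments N n → ℝ) :
    expec (crUniform N n) (fun z =>
        (1 / (n : ℝ)) * ∑ i ∈ Finset.univ.filter (fun i : Fin N => z.1 i = true), y i z
          - (1 / ((N : ℝ) - (n : ℝ)))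
              * ∑ i ∈ Finset.univ.filter (fun i : Fin N => z.1 i = false), y i z)
      = aepo (crUniform N n) y (crExposure N n) true
          - aepo (crUniform N n) y (crExposure N n) false := by
  classical
  have hCpos : 0 < Fintype.card (CRAssignments N n) := Fintype.card_pos_iff.mpr (CR_nonempty hnN)
  set C : ℕ := Fintype.card (CRAssignments N n) with hCdef
  have hC : (C : ℝ) ≠ 0 := Nat.cast_ne_zero.mpr hCpos.ne'
  have hN0 : (0:ℝ) < (N:ℝ) := by exact_mod_cast hn.trans hnN
  have hN : (N:ℝ) ≠ 0 := hN0.ne'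
  have hn' : (n:ℝ) ≠ 0 := Nat.cast_ne_zero.mpr hn.ne'
  have hNn : (N:ℝ) - (n:ℝ) ≠ 0 := by
    have : (n:ℝ) < (N:ℝ) := by exact_mod_cast hnN
    linarith
  have hct : ∀ i : Fin N,
      ((univ.filter fun z : CRAssignments N n => z.1 i = true).card : ℝ) = n * C / N := by
    intro i
    have h := N_mul_card_true (n := n) i
    have h' : (N:ℝ) * ((univ.filter fun z : CRAssignments N n => z.1 i = true).card : ℝ)
        = (n:ℝ) * (C:ℝ) := by exact_mod_cast h
    field_simp
    linarith
  have hcf : ∀ i : Fin N,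
      ((univ.filter fun z : CRAssignments N n => z.1 i = false).card : ℝ)
        = ((N:ℝ) - n) * C / N := by
    intro i
    have hsplit := Finset.card_filter_add_card_filter_not
      (s := (univ : Finset (CRAssignments N n))) (p := fun z => z.1 i = true)
    have hfneg : (univ.filter fun z : CRAssignments N n => ¬ z.1 i = true)
        = univ.filter fun z : CRAssignments N n => z.1 i = false := by
      apply Finset.filter_congr; intro z _; simp
    rw [hfneg, Finset.card_univ] at hsplit
    have h1 := hct i
    have h2 : ((univ.filter fun z : CRAssignments N n => z.1 i = true).card : ℝ)
        + ((univ.filter fun z : CRAssignments N n => z.1 i = false).card : ℝ) = (C:ℝ) := by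
      exact_mod_cast hsplit
    field_simp at h1 ⊢
    linear_combination (N:ℝ) * h2 - h1
  have hRT : aepo (crUniform N n) y (crExposure N n) true
      = ∑ i : Fin N, ((C:ℝ)⁻¹ * (1 / n)) *
          ∑ z ∈ univ.filter (fun z : CRAssignments N n => z.1 i = true), y i z := by
    unfold aepo
    rw [Finset.mul_sum]
    refine Finset.sum_congr rfl fun i _ => ?_
    unfold epo piP crUniform crExposure
    rw [← Finset.sum_mul, Finset.sum_const, nsmul_eq_mul, hct i]
    field_simp
    exact mul_div_cancel_right₀ _ (b := (Fintype.card (CRAssignments N n) : ℝ)) hC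
  have hRF : aepo (crUniform N n) y (crExposure N n) false
      = ∑ i : Fin N, ((C:ℝ)⁻¹ * (1 / ((N:ℝ) - n))) *
          ∑ z ∈ univ.filter (fun z : CRAssignments N n => z.1 i = false), y i z := by
    unfold aepo
    rw [Finset.mul_sum]
    refine Finset.sum_congr rfl fun i _ => ?_
    unfold epo piP crUniform crExposure
    rw [← Finset.sum_mul, Finset.sum_const, nsmul_eq_mul, hcf i]
    field_simp
    exact mul_div_cancel_right₀ _ (b := (Fintype.card (CRAssignments N n) : ℝ)) hC
  rw [hRT, hRF]
  unfold expec crUniform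
  simp only [mul_sub, ← mul_assoc]
  rw [Finset.sum_sub_distrib, sum_swap_bool y _ true, sum_swap_bool y _ false]
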